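/- Define, for parameters n ≥ 2 and 0 < p1 < p0 < 1, the map Φ_n(a,b) = (φ_in(a,b), φ_out(a,b)) on (0,∞)² by φ_in(a,b) = ((n−2)p0²·a + n·p1²·b)/((n−1)p0·a + n·p1·b) and φ_out(a,b) = (2n−2)·p0·p1·b/((n−1)p0·a + n·p1·b), and the recursion w_in^{(0)} = w_out^{(0)} = 1, (w_in^{(t+1)}, w_out^{(t+1)}) = Φ_n(w_in^{(t)}, w_out^{(t)}). Fix T ∈ ℕ and ρ ∈ (0,1/2), and suppose that for every n the parameters satisfy ρ ≤ p1(n)/p0(n) ≤ 1−ρ and p0(n) ≤ 1−ρ; let p̄ = (p0+p1)/2. Then there exist constants 0 < c_{T,ρ} ≤ C_{T,ρ} < ∞ (depending only on T and ρ) and N such that for all n ≥ N and all t ∈ {1, …, T}: c_{T,ρ}·p̄ ≤ w_out^{(t)} ≤ w_in^{(t)} ≤ C_{T,ρ}·p̄. -/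
import Mathlib


namespace MeanField

/-- The mean-field map `Φ_n` on pairs of weights. -/
noncomputable def Phi (n : ℕ) (p0 p1 : ℝ) (ab : ℝ × ℝ) : ℝ × ℝ :=
  ((((n : ℝ) - 2) * p0 ^ 2 * ab.1 + (n : ℝ) * p1 ^ 2 * ab.2)
      / (((n : ℝ) - 1) * p0 * ab.1 + (n : ℝ) * p1 * ab.2),
   ((2 * (n : ℝ) - 2) * p0 * p1 * ab.2)
      / (((n : ℝ) - 1) * p0 * ab.1 + (n : ℝ) * p1 * ab.2))

/-- The benchmark two-weight recursion, started at `(1,1)`. -/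
noncomputable def wseq (n : ℕ) (p0 p1 : ℝ) : ℕ → ℝ × ℝ
  | 0 => (1, 1)
  | t + 1 => Phi n p0 p1 (wseq n p0 p1 t)

/-- One-step estimates for the mean-field map. -/
lemma key_step (n : ℕ) (ρ p0 p1 : ℝ) (ab : ℝ × ℝ) (hρ0 : 0 < ρ) (hρ2 : ρ < 1/2)
    (hn : 3 / ρ ≤ (n : ℝ))
    (hp1 : 0 < p1) (h10 : p1 < p0) (hr1 : ρ * p0 ≤ p1) (hr2 : p1 ≤ (1 - ρ) * p0)
    (hb : 0 < ab.2) (hba : ab.2 ≤ ab.1) :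
    0 < (Phi n p0 p1 ab).2 ∧ (Phi n p0 p1 ab).2 ≤ (Phi n p0 p1 ab).1
    ∧ p1 ≤ (Phi n p0 p1 ab).1 ∧ (Phi n p0 p1 ab).1 ≤ p0
    ∧ ρ * ab.2 * (Phi n p0 p1 ab).1 ≤ ab.1 * (Phi n p0 p1 ab).2 := by
  obtain ⟨a, b⟩ := ab
  simp only at hb hba
  have hp0 : 0 < p0 := hp1.trans h10
  have ha : 0 < a := hb.trans_le hba
  set m : ℝ := (n : ℝ) with hm
  have hmρ : 3 ≤ ρ * m := by
    rw [div_le_iff₀ hρ0] at hn; linarith [hn]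
  have hm6 : 6 ≤ m := by nlinarith
  have hD : 0 < (m - 1) * p0 * a + m * p1 * b := by
    nlinarith [mul_pos hp0 ha, mul_pos hp1 hb]
  have hNa : 0 < (m - 2) * p0 ^ 2 * a + m * p1 ^ 2 * b := by
    nlinarith [mul_pos (mul_pos hp0 hp0) ha, mul_pos (mul_pos hp1 hp1) hb]
  have hNb : 0 < (2 * m - 2) * p0 * p1 * b := by
    nlinarith [mul_pos (mul_pos hp0 hp1) hb]
  have hgap : 0 ≤ m * (p0 - p1) - 2 * p0 := by
    nlinarith [mul_nonneg (by linarith : (0:ℝ) ≤ m) (by nlinarith : (0:ℝ) ≤ p0 - p1 - ρ * p0)]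
  simp only [Phi, ← hm]
  refine ⟨div_pos hNb hD, ?_, ?_, ?_, ?_⟩
  · gcongr
    have h1 : 0 ≤ (a - b) * ((m - 2) * p0 ^ 2) :=
      mul_nonneg (sub_nonneg.2 hba) (by nlinarith [sq_nonneg p0])
    have h2 : 0 ≤ b * (p0 - p1) * (m * (p0 - p1) - 2 * p0) :=
      mul_nonneg (mul_nonneg hb.le (by linarith)) hgap
    linarith [h1, h2]
  · rw [le_div_iff₀ hD]
    have h0 : 0 ≤ (m - 2) * p0 - (m - 1) * p1 := by
      nlinarith [mul_nonneg (by linarith : (0:ℝ) ≤ m - 1) (sub_nonneg.2 hr2),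
        mul_nonneg hp0.le (by linarith : (0:ℝ) ≤ ρ * (m - 1) - 1)]
    have h1 : 0 ≤ p0 * a * ((m - 2) * p0 - (m - 1) * p1) :=
      mul_nonneg (mul_pos hp0 ha).le h0
    linarith [h1]
  · rw [div_le_iff₀ hD]
    have h1 : (0:ℝ) < p0 ^ 2 * a := by positivity
    have h2 : 0 ≤ m * (p1 * b) * (p0 - p1) :=
      mul_nonneg (mul_nonneg (by linarith) (mul_pos hp1 hb).le) (by linarith)
    linarith [h1, h2]
  · rw [← sub_nonneg]
    have e : a * ((2 * m - 2) * p0 * p1 * b / ((m - 1) * p0 * a + m * p1 * b))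
        - ρ * b * (((m - 2) * p0 ^ 2 * a + m * p1 ^ 2 * b) / ((m - 1) * p0 * a + m * p1 * b))
        = (a * ((2 * m - 2) * p0 * p1 * b) - ρ * b * ((m - 2) * p0 ^ 2 * a + m * p1 ^ 2 * b))
          / ((m - 1) * p0 * a + m * p1 * b) := by
      field_simp
    rw [e]
    apply div_nonneg _ hD.le
    linarith [mul_nonneg (mul_nonneg (mul_nonneg hρ0.le (by linarith : (0:ℝ) ≤ m))
        (mul_pos hp1 hp1).le) (mul_nonneg hb.le (sub_nonneg.2 hba)),
      mul_nonneg (mul_nonneg (mul_nonneg hρ0.le (by linarith : (0:ℝ) ≤ m)) (mul_pos ha hb).le)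
        (by nlinarith : (0:ℝ) ≤ p0 ^ 2 - p1 ^ 2),
      mul_nonneg (mul_nonneg (mul_nonneg (mul_pos ha hb).le (by linarith : (0:ℝ) ≤ 2 * m - 2))
        hp0.le) (sub_nonneg.2 hr1)]

/-- Benchmark weights are of order `p̄` for `1 ≤ t ≤ T`.
Fix `T` and `ρ ∈ (0,1/2)`. Under the balanced-contrast window there are constants
`0 < c_{T,ρ} ≤ C_{T,ρ}` and `N` (depending only on `T` and `ρ`) so that for all `n ≥ N` and all
`t ∈ {1,…,T}`, `c_{T,ρ}·p̄ ≤ w_out^{(t)} ≤ w_in^{(t)} ≤ C_{T,ρ}·p̄`. -/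
theorem benchmark_weights_order (T : ℕ) (ρ : ℝ) (hρ0 : 0 < ρ) (hρ2 : ρ < 1/2) :
    ∃ c C : ℝ, 0 < c ∧ c ≤ C ∧ ∃ N : ℕ, ∀ n : ℕ, N ≤ n →
      ∀ p0 p1 : ℝ, 0 < p1 → p1 < p0 → p0 < 1 →
        ρ ≤ p1 / p0 → p1 / p0 ≤ 1 - ρ → p0 ≤ 1 - ρ →
      ∀ t : ℕ, 1 ≤ t → t ≤ T →
        c * ((p0 + p1) / 2) ≤ (wseq n p0 p1 t).2
        ∧ (wseq n p0 p1 t).2 ≤ (wseq n p0 p1 t).1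
        ∧ (wseq n p0 p1 t).1 ≤ C * ((p0 + p1) / 2) := by
  refine ⟨ρ ^ (T + 1), 2, by positivity, ?_, ⌈3 / ρ⌉₊, ?_⟩
  · have : ρ ^ (T + 1) ≤ 1 := pow_le_one₀ hρ0.le (by linarith)
    linarith
  intro n hn p0 p1 hp1 h10 h01 hr1 hr2 hp0ρ
  have hp0 : 0 < p0 := hp1.trans h10
  have hr1' : ρ * p0 ≤ p1 := (le_div_iff₀ hp0).mp hr1
  have hr2' : p1 ≤ (1 - ρ) * p0 := by
    have := (div_le_iff₀ hp0).mp hr2; linarith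
  have hn' : 3 / ρ ≤ (n : ℝ) := le_trans (Nat.le_ceil _) (Nat.cast_le.2 hn)
  -- the inductive invariant
  have inv : ∀ t, 0 < (wseq n p0 p1 t).2 ∧ (wseq n p0 p1 t).2 ≤ (wseq n p0 p1 t).1
      ∧ ρ ^ t * (wseq n p0 p1 t).1 ≤ (wseq n p0 p1 t).2 := by
    intro t
    induction t with
    | zero => norm_num [wseq]
    | succ t ih =>
      obtain ⟨hb, hba, hr⟩ := ih
      obtain ⟨h1, h2, _h3, _h4, h5⟩ :=
        key_step n ρ p0 p1 (wseq n p0 p1 t) hρ0 hρ2 hn' hp1 h10 hr1' hr2' hb hba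
      have ha : 0 < (wseq n p0 p1 t).1 := hb.trans_le hba
      refine ⟨by simpa [wseq] using h1, by simpa [wseq] using h2, ?_⟩
      have ha' : 0 < (Phi n p0 p1 (wseq n p0 p1 t)).1 := h1.trans_le h2
      have step1 : ρ * (ρ ^ t * (wseq n p0 p1 t).1) * (Phi n p0 p1 (wseq n p0 p1 t)).1
          ≤ ρ * (wseq n p0 p1 t).2 * (Phi n p0 p1 (wseq n p0 p1 t)).1 := by
        apply mul_le_mul_of_nonneg_right _ ha'.le
        exact mul_le_mul_of_nonneg_left hr hρ0.le
      have key : ρ ^ (t + 1) * (Phi n p0 p1 (wseq n p0 p1 t)).1 * (wseq n p0 p1 t).1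
          ≤ (Phi n p0 p1 (wseq n p0 p1 t)).2 * (wseq n p0 p1 t).1 := by
        have e : ρ ^ (t + 1) * (Phi n p0 p1 (wseq n p0 p1 t)).1 * (wseq n p0 p1 t).1
            = ρ * (ρ ^ t * (wseq n p0 p1 t).1) * (Phi n p0 p1 (wseq n p0 p1 t)).1 := by ring
        rw [e]
        calc ρ * (ρ ^ t * (wseq n p0 p1 t).1) * (Phi n p0 p1 (wseq n p0 p1 t)).1
            ≤ ρ * (wseq n p0 p1 t).2 * (Phi n p0 p1 (wseq n p0 p1 t)).1 := step1
          _ ≤ (wseq n p0 p1 t).1 * (Phi n p0 p1 (wseq n p0 p1 t)).2 := h5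
          _ = (Phi n p0 p1 (wseq n p0 p1 t)).2 * (wseq n p0 p1 t).1 := by ring
      have := le_of_mul_le_mul_right key ha
      simpa [wseq] using this
  intro t ht1 htT
  obtain ⟨s, rfl⟩ : ∃ s, t = s + 1 := ⟨t - 1, by omega⟩
  obtain ⟨hb, hba, hr⟩ := inv s
  obtain ⟨_h1, _h2, h3, h4, _h5⟩ :=
    key_step n ρ p0 p1 (wseq n p0 p1 s) hρ0 hρ2 hn' hp1 h10 hr1' hr2' hb hba
  obtain ⟨hb', hba', hr'⟩ := inv (s + 1)
  have ha1 : p1 ≤ (wseq n p0 p1 (s + 1)).1 := by simpa [wseq] using h3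
  have ha0 : (wseq n p0 p1 (s + 1)).1 ≤ p0 := by simpa [wseq] using h4
  refine ⟨?_, hba', ?_⟩
  · -- lower bound for the out-weight
    have hpow : ρ ^ T ≤ ρ ^ (s + 1) := pow_le_pow_of_le_one hρ0.le (by linarith) htT
    have l1 : ρ ^ (T + 1) * ((p0 + p1) / 2) ≤ ρ ^ (s + 1) * p1 := by
      have e : ρ ^ (T + 1) * ((p0 + p1) / 2) = ρ ^ T * (ρ * ((p0 + p1) / 2)) := by ring
      rw [e]
      apply mul_le_mul hpow (by nlinarith) (by positivity) (pow_nonneg hρ0.le _)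
    have l2 : ρ ^ (s + 1) * p1 ≤ ρ ^ (s + 1) * (wseq n p0 p1 (s + 1)).1 :=
      mul_le_mul_of_nonneg_left ha1 (pow_nonneg hρ0.le _)
    linarith [l1, l2, hr']
  · -- upper bound
    have : p0 ≤ 2 * ((p0 + p1) / 2) := by linarith
    linarith [ha0, this]

end MeanField
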